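/- Let σ and τ be protagonist strategies in an initialized generalised safety/reachability game with initial vertex v₀. Suppose that for every maximal history h compatible with both σ and τ (i.e., h is compatible with both and no proper extension of h is compatible with both) there is a prefix h' of h with aVal(h', σ) = aVal(h', τ) and cVal(h', σ) = cVal(h', τ). Then aVal(v₀, σ) = aVal(v₀, τ) and cVal(v₀, σ) = cVal(v₀, τ). -/

import Mathlib

open scoped Classical

/-- A generalised safety/reachability game: a finite directed graph where every vertex has a
successor, a set `protag` of protagonist vertices (the rest belong to the antagonist), a set
`leaf` of leaves (each equipped with exactly a self-loop), an integer payoff attached to each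
leaf, and an initial vertex `v0`. -/
structure GSRGame where
  V : Type
  fin : Finite V
  E : V → V → Prop
  succ_exists : ∀ v : V, ∃ w : V, E v w
  protag : V → Prop
  leaf : V → Prop
  leaf_loop : ∀ v w : V, leaf v → (E v w ↔ w = v)
  pay : V → ℤ
  v0 : V

namespace GSRGame

variable (g : GSRGame)

/-- A strategy: to each nonempty history it assigns a successor of the last vertex.
(A protagonist strategy is only ever consulted at histories ending in a protagonist vertex,
an antagonist strategy at histories ending in an antagonist vertex.) -/
structure Strat where
  act : List g.V → g.V
  valid : ∀ (h : List g.V) (hne : h ≠ []), g.E (h.getLast hne) (act h)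

/-- One step of the play extending history `h`: the protagonist moves according to `σ` at
protagonist vertices, the antagonist according to `τ` elsewhere. -/
noncomputable def step (σ τ : g.Strat) (h : List g.V) : List g.V :=
  h ++ [if g.protag (h.getLastD g.v0) then σ.act h else τ.act h]

/-- The history obtained after `k` steps of play by `(σ, τ)` extending `h`. -/
noncomputable def playList (σ τ : g.Strat) (h : List g.V) : ℕ → List g.V
  | 0 => h
  | k + 1 => g.step σ τ (playList σ τ h k)

/-- The outcome (infinite path) induced by `(σ, τ)` from the history `h`. -/
noncomputable def play (σ τ : g.Strat) (h : List g.V) (k : ℕ) : g.V :=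
  (g.playList σ τ h k).getLastD g.v0

/-- The payoff of an outcome: the payoff of the leaf it reaches, and `0` if it reaches
no leaf. -/
noncomputable def payoffOf (ρ : ℕ → g.V) : ℤ :=
  if hx : ∃ k : ℕ, g.leaf (ρ k) then g.pay (ρ (Nat.find hx)) else 0

/-- The payoff `p(h, σ, τ)` of the outcome induced by `(σ, τ)` from the history `h`. -/
noncomputable def pval (σ τ : g.Strat) (h : List g.V) : ℤ :=
  g.payoffOf (g.play σ τ h)

/-- `h` is a history (a nonempty path starting at `v0`) compatible with the protagonist
strategy `σ`: every protagonist move along `h` agrees with `σ`. -/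
def Compat (σ : g.Strat) (h : List g.V) : Prop :=
  h ≠ [] ∧ h.head? = some g.v0 ∧ List.Chain' g.E h ∧
    ∀ (p : List g.V) (v : g.V), (p ++ [v]) <+: h → p ≠ [] →
      g.protag (p.getLastD g.v0) → σ.act p = v

/-- The cooperative value `cVal(h, σ)`. -/
noncomputable def cVal (σ : g.Strat) (h : List g.V) : ℤ :=
  sSup {z : ℤ | ∃ τ : g.Strat, z = g.pval σ τ h}

/-- The antagonistic value `aVal(h, σ)`. -/
noncomputable def aVal (σ : g.Strat) (h : List g.V) : ℤ :=
  sInf {z : ℤ | ∃ τ : g.Strat, z = g.pval σ τ h}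

/-- The antagonistic value `aVal(h)` of a history. -/
noncomputable def aValH (h : List g.V) : ℤ :=
  sSup {z : ℤ | ∃ σ : g.Strat, z = g.aVal σ h}

/-- The antagonistic-cooperative value `acVal(h)` of a history. -/
noncomputable def acVal (h : List g.V) : ℤ :=
  sSup {z : ℤ | ∃ σ : g.Strat, g.aValH h ≤ g.aVal σ h ∧ z = g.cVal σ h}

/-- Weak dominance `σ ⪯ σ'` (from the initial vertex `v0`). -/
def Dom (σ σ' : g.Strat) : Prop :=
  ∀ τ : g.Strat, g.pval σ τ [g.v0] ≤ g.pval σ' τ [g.v0]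

/-- Dominance `σ ≺ σ'`. -/
def SDom (σ σ' : g.Strat) : Prop :=
  g.Dom σ σ' ∧ ∃ τ : g.Strat, g.pval σ τ [g.v0] < g.pval σ' τ [g.v0]

/-- Admissibility: `σ` is dominated by no strategy. -/
def Admissible (σ : g.Strat) : Prop := ¬ ∃ σ' : g.Strat, g.SDom σ σ'

/-- `h` is a witness of non-dominance of `σ₁` by `σ₂`. -/
def NonDomWitness (σ₁ σ₂ : g.Strat) (h : List g.V) : Prop :=
  g.Compat σ₁ h ∧ g.Compat σ₂ h ∧ g.protag (h.getLastD g.v0) ∧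
    σ₁.act h ≠ σ₂.act h ∧ g.aVal σ₂ h < g.cVal σ₁ h

/-- `h` is a witness of non-admissibility of `σ`. -/
def NonAdmWitness (σ : g.Strat) (h : List g.V) : Prop :=
  g.Compat σ h ∧
    g.aVal σ h ≤ g.cVal σ h ∧ g.cVal σ h ≤ g.aValH h ∧ g.aValH h ≤ g.acVal h ∧
    (g.aVal σ h < g.cVal σ h ∨ g.cVal σ h < g.aValH h ∨ g.aValH h < g.acVal h)

end GSRGame

namespace GSRGame

variable (g : GSRGame)

noncomputable def defStrat : g.Strat where
  act h := if hne : h ≠ [] then Classical.choose (g.succ_exists (h.getLast hne))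
           else Classical.choose (g.succ_exists g.v0)
  valid h hne := by
    rw [dif_pos hne]
    exact Classical.choose_spec (g.succ_exists (h.getLast hne))

lemma pSet_nonempty (σ : g.Strat) (h : List g.V) :
    {z : ℤ | ∃ τ : g.Strat, z = g.pval σ τ h}.Nonempty :=
  ⟨_, g.defStrat, rfl⟩

lemma pSet_finite (σ : g.Strat) (h : List g.V) :
    {z : ℤ | ∃ τ : g.Strat, z = g.pval σ τ h}.Finite := by
  haveI : Finite g.V := g.fin
  have hsub : {z : ℤ | ∃ τ : g.Strat, z = g.pval σ τ h} ⊆ insert 0 (Set.range g.pay) := by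
    rintro z ⟨τ, rfl⟩
    unfold pval payoffOf
    split
    · exact Set.mem_insert_iff.mpr (Or.inr ⟨_, rfl⟩)
    · exact Set.mem_insert _ _
  exact ((Set.finite_range g.pay).insert 0).subset hsub

lemma aVal_le_pval (σ τ' : g.Strat) (h : List g.V) : g.aVal σ h ≤ g.pval σ τ' h :=
  csInf_le (g.pSet_finite σ h).bddBelow ⟨τ', rfl⟩

lemma pval_le_cVal (σ τ' : g.Strat) (h : List g.V) : g.pval σ τ' h ≤ g.cVal σ h :=
  le_csSup (g.pSet_finite σ h).bddAbove ⟨τ', rfl⟩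

lemma le_aVal (σ : g.Strat) (h : List g.V) {z : ℤ}
    (hz : ∀ τ' : g.Strat, z ≤ g.pval σ τ' h) : z ≤ g.aVal σ h :=
  le_csInf (g.pSet_nonempty σ h) (by rintro b ⟨τ', rfl⟩; exact hz τ')

lemma exists_pval_eq_aVal (σ : g.Strat) (h : List g.V) :
    ∃ τ' : g.Strat, g.pval σ τ' h = g.aVal σ h := by
  obtain ⟨τ', hτ'⟩ := (g.pSet_nonempty σ h).csInf_mem (g.pSet_finite σ h)
  exact ⟨τ', hτ'.symm⟩

lemma exists_pval_eq_cVal (σ : g.Strat) (h : List g.V) :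
    ∃ τ' : g.Strat, g.pval σ τ' h = g.cVal σ h := by
  obtain ⟨τ', hτ'⟩ := (g.pSet_nonempty σ h).csSup_mem (g.pSet_finite σ h)
  exact ⟨τ', hτ'.symm⟩

lemma playList_succ (σ τ : g.Strat) (h : List g.V) (k : ℕ) :
    g.playList σ τ h (k + 1) = g.step σ τ (g.playList σ τ h k) := rfl

lemma playList_length (σ τ : g.Strat) (h : List g.V) (k : ℕ) :
    (g.playList σ τ h k).length = h.length + k := by
  induction k with
  | zero => rfl
  | succ k ih =>
    rw [playList_succ, step, List.length_append, ih]
    simp; omega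

lemma playList_ne_nil (σ τ : g.Strat) {h : List g.V} (hne : h ≠ []) (k : ℕ) :
    g.playList σ τ h k ≠ [] := by
  rw [← List.length_pos_iff, g.playList_length]
  have := List.length_pos_iff.mpr hne
  omega

lemma playList_prefix (σ τ : g.Strat) (h : List g.V) {j k : ℕ} (hjk : j ≤ k) :
    g.playList σ τ h j <+: g.playList σ τ h k := by
  induction k with
  | zero =>
    obtain rfl : j = 0 := Nat.le_zero.mp hjk
    exact List.prefix_rfl
  | succ k ih =>
    rcases Nat.lt_succ_iff_lt_or_eq.mp (Nat.lt_succ_of_le hjk) with hlt | rfl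
    · refine (ih (by omega)).trans ?_
      rw [playList_succ, step]
      exact List.prefix_append _ _
    · exact List.prefix_rfl

lemma playList_add (σ τ : g.Strat) (h : List g.V) (j k : ℕ) :
    g.playList σ τ (g.playList σ τ h j) k = g.playList σ τ h (j + k) := by
  induction k with
  | zero => rfl
  | succ k ih => rw [playList_succ, ih]; rfl

lemma prefix_playList_eq (σ τ : g.Strat) {p : List g.V} {k : ℕ}
    (hp : p <+: g.playList σ τ [g.v0] k) (hne : p ≠ []) :
    p = g.playList σ τ [g.v0] (p.length - 1) := by
  have hlp : 1 ≤ p.length := List.length_pos_iff.mpr hne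
  have hlen : p.length ≤ k + 1 := by
    have := hp.length_le
    rw [g.playList_length] at this
    simp at this
    omega
  have h1 : g.playList σ τ [g.v0] (p.length - 1) <+: g.playList σ τ [g.v0] k :=
    g.playList_prefix σ τ _ (by omega)
  have hlen2 : (g.playList σ τ [g.v0] (p.length - 1)).length = p.length := by
    rw [g.playList_length]
    simp
    omega
  exact (List.prefix_of_prefix_length_le hp h1 (le_of_eq hlen2.symm)).eq_of_length hlen2.symm

lemma getLastD_eq_getLast {l : List g.V} (hne : l ≠ []) : l.getLastD g.v0 = l.getLast hne := by
  rw [List.getLastD_eq_getLast?, List.getLast?_eq_getLast hne]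
  rfl

lemma play_succ (σ τ : g.Strat) (h : List g.V) (k : ℕ) :
    g.play σ τ h (k + 1) =
      (if g.protag ((g.playList σ τ h k).getLastD g.v0) then σ.act (g.playList σ τ h k)
       else τ.act (g.playList σ τ h k)) := by
  show (g.step σ τ _).getLastD g.v0 = _
  rw [step, List.getLastD_concat]

lemma play_absorb (σ τ : g.Strat) {h : List g.V} (hne : h ≠ []) {i j : ℕ} (hij : i ≤ j)
    (hleaf : g.leaf (g.play σ τ h i)) : g.play σ τ h j = g.play σ τ h i := by
  induction j, hij using Nat.le_induction with
  | base => rfl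
  | succ j hij ih =>
    have hpne := g.playList_ne_nil σ τ hne j
    have hleafj : g.leaf (g.play σ τ h j) := ih ▸ hleaf
    rw [g.play_succ]
    have hE : ∀ w, g.E ((g.playList σ τ h j).getLastD g.v0) w → w = g.play σ τ h j :=
      fun w hw => (g.leaf_loop _ w hleafj).mp hw
    split
    · refine (hE _ ?_).trans ih
      rw [g.getLastD_eq_getLast hpne]
      exact σ.valid _ hpne
    · refine (hE _ ?_).trans ih
      rw [g.getLastD_eq_getLast hpne]
      exact τ.valid _ hpne

lemma payoffOf_shift (ρ : ℕ → g.V) (m : ℕ)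
    (habs : ∀ i j, i ≤ j → g.leaf (ρ i) → ρ j = ρ i) :
    g.payoffOf (fun k => ρ (m + k)) = g.payoffOf ρ := by
  unfold payoffOf
  by_cases hx : ∃ k, g.leaf (ρ k)
  · have hy : ∃ k, g.leaf (ρ (m + k)) := by
      obtain ⟨n, hn⟩ := hx
      exact ⟨n, by rw [habs n (m + n) (Nat.le_add_left n m) hn]; exact hn⟩
    rw [dif_pos hy, dif_pos hx]
    show g.pay (ρ (m + Nat.find hy)) = g.pay (ρ (Nat.find hx))
    have hb : g.leaf (ρ (m + Nat.find hy)) := Nat.find_spec hy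
    have hab : Nat.find hx ≤ m + Nat.find hy := Nat.find_le hb
    rw [habs (Nat.find hx) (m + Nat.find hy) hab (Nat.find_spec hx)]
  · have hy : ¬ ∃ k, g.leaf (ρ (m + k)) := fun ⟨k, hk⟩ => hx ⟨m + k, hk⟩
    rw [dif_neg hy, dif_neg hx]

lemma pval_playList (σ τ : g.Strat) {h : List g.V} (hne : h ≠ []) (m : ℕ) :
    g.pval σ τ (g.playList σ τ h m) = g.pval σ τ h := by
  have h1 : g.play σ τ (g.playList σ τ h m) = fun k => g.play σ τ h (m + k) := by
    funext k
    show (g.playList σ τ (g.playList σ τ h m) k).getLastD g.v0 = _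
    rw [g.playList_add]
    rfl
  unfold pval
  rw [h1]
  exact g.payoffOf_shift _ m (fun i j hij hl => g.play_absorb σ τ hne hij hl)

lemma pval_congr {σ₁ τ₁ σ₂ τ₂ : g.Strat} {h₁ h₂ : List g.V}
    (hpl : ∀ k, g.playList σ₁ τ₁ h₁ k = g.playList σ₂ τ₂ h₂ k) :
    g.pval σ₁ τ₁ h₁ = g.pval σ₂ τ₂ h₂ := by
  unfold pval
  congr 1
  funext k
  show (g.playList σ₁ τ₁ h₁ k).getLastD g.v0 = (g.playList σ₂ τ₂ h₂ k).getLastD g.v0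
  rw [hpl k]

lemma compat_prefix {σ : g.Strat} {h p : List g.V} (hc : g.Compat σ h) (hp : p <+: h)
    (hne : p ≠ []) : g.Compat σ p := by
  obtain ⟨-, hhead, hchain, hmoves⟩ := hc
  refine ⟨hne, ?_, hchain.prefix hp, fun q v hqv hqne hprot =>
    hmoves q v (hqv.trans hp) hqne hprot⟩
  obtain ⟨t, rfl⟩ := hp
  cases p with
  | nil => exact absurd rfl hne
  | cons a l => simpa using hhead

lemma chain'_playList (σ τ : g.Strat) {h : List g.V} (hne : h ≠ [])
    (hch : List.Chain' g.E h) (k : ℕ) : List.Chain' g.E (g.playList σ τ h k) := by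
  induction k with
  | zero => exact hch
  | succ k ih =>
    have hpne := g.playList_ne_nil σ τ hne k
    rw [playList_succ, step, List.Chain', List.isChain_append]
    refine ⟨ih, List.isChain_singleton _, ?_⟩
    intro x hx y hy
    rw [List.getLast?_eq_getLast hpne, Option.mem_def, Option.some_inj] at hx
    simp only [List.head?_cons, Option.mem_def, Option.some_inj] at hy
    subst hx; subst hy
    split
    · exact σ.valid _ hpne
    · exact τ.valid _ hpne

lemma head?_playList (σ τ : g.Strat) (k : ℕ) :
    (g.playList σ τ [g.v0] k).head? = some g.v0 := by
  obtain ⟨t, ht⟩ := g.playList_prefix σ τ [g.v0] (Nat.zero_le k)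
  rw [← ht]
  rfl

lemma compat_playList (σ τ : g.Strat) (m : ℕ) : g.Compat σ (g.playList σ τ [g.v0] m) := by
  refine ⟨g.playList_ne_nil σ τ (by simp) m, g.head?_playList σ τ m,
    g.chain'_playList σ τ (by simp) (List.isChain_singleton _) m, ?_⟩
  intro p v hpv hpne hprot
  have hpvne : p ++ [v] ≠ [] := by simp
  have h1 : p ++ [v] = g.playList σ τ [g.v0] ((p ++ [v]).length - 1) :=
    g.prefix_playList_eq σ τ hpv hpvne
  have h2 : p = g.playList σ τ [g.v0] (p.length - 1) :=
    g.prefix_playList_eq σ τ ((List.prefix_append p [v]).trans hpv) hpne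
  have hlp : 1 ≤ p.length := List.length_pos_iff.mpr hpne
  have hlen : (p ++ [v]).length - 1 = (p.length - 1) + 1 := by simp; omega
  rw [hlen, playList_succ, step, ← h2] at h1
  have h3 : v = if g.protag (p.getLastD g.v0) then σ.act p else τ.act p := by
    simpa using List.append_cancel_left h1
  rw [if_pos hprot] at h3
  exact h3.symm

end GSRGame

namespace GSRGame

variable (g : GSRGame)

/-- Antagonist strategy following the path `p`, then playing like `τ''`. -/
noncomputable def fol (p : List g.V) (hch : List.Chain' g.E p) (τ'' : g.Strat) : g.Strat where
  act h := if h <+: p ∧ h ≠ p then p.getD h.length g.v0 else τ''.act h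
  valid h hne := by
    split_ifs with hh
    · obtain ⟨hpre, hne'⟩ := hh
      have hlt : h.length < p.length :=
        lt_of_le_of_ne hpre.length_le (fun he => hne' (hpre.eq_of_length he))
      have h1 : 1 ≤ h.length := List.length_pos_iff.mpr hne
      rw [List.getD_eq_getElem _ _ hlt]
      have hgl : h.getLast hne = p[h.length - 1] := by
        rw [List.getLast_eq_getElem]
        exact hpre.getElem (by omega)
      rw [hgl]
      have h2 := List.isChain_iff_getElem.mp hch (h.length - 1) (by omega)
      simpa [Nat.sub_add_cancel h1] using h2
    · exact τ''.valid h hne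

lemma fol_act_of_proper_prefix {p : List g.V} (hch : List.Chain' g.E p) (τ'' : g.Strat)
    {h : List g.V} (hpre : h <+: p) (hne : h ≠ p) :
    (g.fol p hch τ'').act h = p.getD h.length g.v0 := by
  show (if h <+: p ∧ h ≠ p then p.getD h.length g.v0 else τ''.act h) = _
  rw [if_pos ⟨hpre, hne⟩]

lemma fol_act_of_not {p : List g.V} (hch : List.Chain' g.E p) (τ'' : g.Strat)
    {h : List g.V} (hno : ¬ (h <+: p ∧ h ≠ p)) :
    (g.fol p hch τ'').act h = τ''.act h := by
  show (if h <+: p ∧ h ≠ p then p.getD h.length g.v0 else τ''.act h) = _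
  rw [if_neg hno]

lemma fol_reaches {σ : g.Strat} {p : List g.V} (hcp : g.Compat σ p)
    (hch : List.Chain' g.E p) (τ'' : g.Strat) :
    ∀ j, j + 1 ≤ p.length → g.playList σ (g.fol p hch τ'') [g.v0] j = p.take (j + 1) := by
  intro j
  induction j with
  | zero =>
    intro _
    obtain ⟨hpne, hhead, -, -⟩ := hcp
    cases p with
    | nil => exact absurd rfl hpne
    | cons a l =>
      simp only [List.head?_cons, Option.some_inj] at hhead
      simp [playList, hhead]
  | succ j ih =>
    intro hj1
    have hlt : j + 1 < p.length := by omega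
    rw [playList_succ, ih (by omega), step]
    have htake : (p.take (j + 1)).length = j + 1 := by
      rw [List.length_take]
      omega
    have hne : p.take (j + 1) ≠ [] := by
      rw [← List.length_pos_iff, htake]
      omega
    have hget : p.take (j + 1) ++ [p[j + 1]] = p.take (j + 1 + 1) := by
      have := List.take_concat_get hlt
      simpa [List.concat_eq_append] using this
    have hx : (if g.protag ((p.take (j + 1)).getLastD g.v0) then σ.act (p.take (j + 1))
        else (g.fol p hch τ'').act (p.take (j + 1))) = p[j + 1] := by
      split_ifs with hprot
      · exact hcp.2.2.2 (p.take (j + 1)) p[j + 1]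
          (by rw [hget]; exact List.take_prefix _ _) hne hprot
      · rw [g.fol_act_of_proper_prefix hch τ'' (List.take_prefix _ _)
          (fun he => by have := congrArg List.length he; rw [htake] at this; omega)]
        rw [htake, List.getD_eq_getElem _ _ hlt]
    rw [hx, hget]

lemma fol_after {σ : g.Strat} {p : List g.V} (hpne : p ≠ []) (hch : List.Chain' g.E p)
    (τ'' : g.Strat) (j : ℕ) :
    g.playList σ (g.fol p hch τ'') p j = g.playList σ τ'' p j := by
  induction j with
  | zero => rfl
  | succ j ih =>
    have hpre : p <+: g.playList σ τ'' p j := g.playList_prefix σ τ'' p (Nat.zero_le j)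
    have hcond : ¬ (g.playList σ τ'' p j <+: p ∧ g.playList σ τ'' p j ≠ p) := by
      rintro ⟨h1, h2⟩
      exact h2 (h1.eq_of_length (le_antisymm h1.length_le hpre.length_le))
    rw [playList_succ, playList_succ, ih, step, step,
      g.fol_act_of_not hch τ'' hcond]

lemma fol_pval {σ : g.Strat} {p : List g.V} (hcp : g.Compat σ p)
    (hch : List.Chain' g.E p) (τ'' : g.Strat) :
    g.pval σ (g.fol p hch τ'') [g.v0] = g.pval σ τ'' p := by
  have hpne : p ≠ [] := hcp.1
  have hlp : 1 ≤ p.length := List.length_pos_iff.mpr hpne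
  have hreach : g.playList σ (g.fol p hch τ'') [g.v0] (p.length - 1) = p := by
    rw [g.fol_reaches hcp hch τ'' (p.length - 1) (by omega),
      show p.length - 1 + 1 = p.length by omega, List.take_length]
  calc g.pval σ (g.fol p hch τ'') [g.v0]
      = g.pval σ (g.fol p hch τ'')
          (g.playList σ (g.fol p hch τ'') [g.v0] (p.length - 1)) :=
        (g.pval_playList σ _ (by simp) _).symm
    _ = g.pval σ (g.fol p hch τ'') p := by rw [hreach]
    _ = g.pval σ τ'' p := g.pval_congr (fun k => g.fol_after hpne hch τ'' k)

lemma caseSplit (σ τ τ' : g.Strat) :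
    (∀ j, g.playList σ τ' [g.v0] j = g.playList τ τ' [g.v0] j) ∨
    ∃ m, (∀ j, j ≤ m → g.playList σ τ' [g.v0] j = g.playList τ τ' [g.v0] j) ∧
      g.protag ((g.playList τ τ' [g.v0] m).getLastD g.v0) ∧
      σ.act (g.playList τ τ' [g.v0] m) ≠ τ.act (g.playList τ τ' [g.v0] m) := by
  by_cases hA : ∀ j, g.playList σ τ' [g.v0] j = g.playList τ τ' [g.v0] j
  · exact Or.inl hA
  · right
    push_neg at hA
    have hex : ∃ n, g.playList σ τ' [g.v0] n ≠ g.playList τ τ' [g.v0] n := hA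
    have hspec := Nat.find_spec hex
    have hmin : ∀ j, j < Nat.find hex →
        g.playList σ τ' [g.v0] j = g.playList τ τ' [g.v0] j :=
      fun j hj => not_not.mp (Nat.find_min hex hj)
    have hN0 : Nat.find hex ≠ 0 := by
      intro h0
      rw [h0] at hspec
      exact hspec rfl
    obtain ⟨m, hm1⟩ : ∃ m, Nat.find hex = m + 1 := ⟨Nat.find hex - 1, by omega⟩
    have hm : g.playList σ τ' [g.v0] m = g.playList τ τ' [g.v0] m := hmin m (by omega)
    have hstep : g.step σ τ' (g.playList τ τ' [g.v0] m) ≠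
        g.step τ τ' (g.playList τ τ' [g.v0] m) := by
      intro he
      apply hspec
      rw [hm1, playList_succ, playList_succ, hm]
      exact he
    rw [step, step] at hstep
    have hxy : (if g.protag ((g.playList τ τ' [g.v0] m).getLastD g.v0)
          then σ.act (g.playList τ τ' [g.v0] m) else τ'.act (g.playList τ τ' [g.v0] m)) ≠
        (if g.protag ((g.playList τ τ' [g.v0] m).getLastD g.v0)
          then τ.act (g.playList τ τ' [g.v0] m) else τ'.act (g.playList τ τ' [g.v0] m)) :=
      fun he => hstep (by rw [he])
    have key : g.protag ((g.playList τ τ' [g.v0] m).getLastD g.v0) ∧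
        σ.act (g.playList τ τ' [g.v0] m) ≠ τ.act (g.playList τ τ' [g.v0] m) := by
      by_cases hprot : g.protag ((g.playList τ τ' [g.v0] m).getLastD g.v0)
      · rw [if_pos hprot, if_pos hprot] at hxy
        exact ⟨hprot, hxy⟩
      · rw [if_neg hprot, if_neg hprot] at hxy
        exact absurd rfl hxy
    exact ⟨m, fun j hj => hmin j (by omega), key.1, key.2⟩

lemma main_aux (σ τ : g.Strat)
    (hyp : ∀ h : List g.V, g.Compat σ h → g.Compat τ h →
      (∀ h' : List g.V, h <+: h' → h ≠ h' → ¬ (g.Compat σ h' ∧ g.Compat τ h')) →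
      ∃ p : List g.V, p <+: h ∧ p ≠ [] ∧
        g.aVal σ p = g.aVal τ p ∧ g.cVal σ p = g.cVal τ p)
    (τ' : g.Strat) (m : ℕ)
    (hagr : ∀ j, j ≤ m → g.playList σ τ' [g.v0] j = g.playList τ τ' [g.v0] j)
    (hprot : g.protag ((g.playList τ τ' [g.v0] m).getLastD g.v0))
    (hdis : σ.act (g.playList τ τ' [g.v0] m) ≠ τ.act (g.playList τ τ' [g.v0] m)) :
    ∃ p : List g.V, p ≠ [] ∧ g.Compat σ p ∧ g.Compat τ p ∧
      p = g.playList σ τ' [g.v0] (p.length - 1) ∧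
      p = g.playList τ τ' [g.v0] (p.length - 1) ∧
      g.aVal σ p = g.aVal τ p ∧ g.cVal σ p = g.cVal τ p := by
  set h := g.playList τ τ' [g.v0] m with hh
  have hσh : g.Compat σ h := by
    rw [hh, ← hagr m le_rfl]
    exact g.compat_playList σ τ' m
  have hτh : g.Compat τ h := g.compat_playList τ τ' m
  have hmax : ∀ h' : List g.V, h <+: h' → h ≠ h' → ¬ (g.Compat σ h' ∧ g.Compat τ h') := by
    rintro h' hpre hne ⟨hc1, hc2⟩
    obtain ⟨t, rfl⟩ := hpre
    cases t with
    | nil => exact hne (by simp)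
    | cons w t =>
      have hw : h ++ [w] <+: h ++ w :: t := ⟨t, by simp⟩
      have h1 : σ.act h = w := hc1.2.2.2 h w hw hτh.1 hprot
      have h2 : τ.act h = w := hc2.2.2.2 h w hw hτh.1 hprot
      exact hdis (h1.trans h2.symm)
  obtain ⟨p, hph, hpne, ha, hc⟩ := hyp h hσh hτh hmax
  have hpτ : p = g.playList τ τ' [g.v0] (p.length - 1) := g.prefix_playList_eq τ τ' hph hpne
  have hplen : p.length - 1 ≤ m := by
    have := hph.length_le
    rw [hh, g.playList_length] at this
    simp at this
    omega
  have hpσ : p = g.playList σ τ' [g.v0] (p.length - 1) := hpτ.trans (hagr _ hplen).symm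
  exact ⟨p, hpne, g.compat_prefix hσh hph hpne, g.compat_prefix hτh hph hpne,
    hpσ, hpτ, ha, hc⟩

lemma aVal_mono (σ τ : g.Strat)
    (hyp : ∀ h : List g.V, g.Compat σ h → g.Compat τ h →
      (∀ h' : List g.V, h <+: h' → h ≠ h' → ¬ (g.Compat σ h' ∧ g.Compat τ h')) →
      ∃ p : List g.V, p <+: h ∧ p ≠ [] ∧
        g.aVal σ p = g.aVal τ p ∧ g.cVal σ p = g.cVal τ p) :
    g.aVal σ [g.v0] ≤ g.aVal τ [g.v0] := by
  apply g.le_aVal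
  intro τ'
  rcases g.caseSplit σ τ τ' with hA | ⟨m, hagr, hprot, hdis⟩
  · calc g.aVal σ [g.v0] ≤ g.pval σ τ' [g.v0] := g.aVal_le_pval σ τ' [g.v0]
      _ = g.pval τ τ' [g.v0] := g.pval_congr hA
  · obtain ⟨p, hpne, hcσ, hcτ, hpσ, hpτ, ha, hc⟩ := g.main_aux σ τ hyp τ' m hagr hprot hdis
    obtain ⟨τ'', hτ''⟩ := g.exists_pval_eq_aVal σ p
    have hchp : List.Chain' g.E p := hcσ.2.2.1
    calc g.aVal σ [g.v0]
        ≤ g.pval σ (g.fol p hchp τ'') [g.v0] := g.aVal_le_pval σ _ [g.v0]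
      _ = g.pval σ τ'' p := g.fol_pval hcσ hchp τ''
      _ = g.aVal σ p := hτ''
      _ = g.aVal τ p := ha
      _ ≤ g.pval τ τ' p := g.aVal_le_pval τ τ' p
      _ = g.pval τ τ' [g.v0] := by rw [hpτ]; exact g.pval_playList τ τ' (by simp) _

lemma cVal_mono (σ τ : g.Strat)
    (hyp : ∀ h : List g.V, g.Compat σ h → g.Compat τ h →
      (∀ h' : List g.V, h <+: h' → h ≠ h' → ¬ (g.Compat σ h' ∧ g.Compat τ h')) →
      ∃ p : List g.V, p <+: h ∧ p ≠ [] ∧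
        g.aVal σ p = g.aVal τ p ∧ g.cVal σ p = g.cVal τ p) :
    g.cVal σ [g.v0] ≤ g.cVal τ [g.v0] := by
  obtain ⟨τ', hτ'⟩ := g.exists_pval_eq_cVal σ [g.v0]
  rcases g.caseSplit σ τ τ' with hA | ⟨m, hagr, hprot, hdis⟩
  · calc g.cVal σ [g.v0] = g.pval σ τ' [g.v0] := hτ'.symm
      _ = g.pval τ τ' [g.v0] := g.pval_congr hA
      _ ≤ g.cVal τ [g.v0] := g.pval_le_cVal τ τ' [g.v0]
  · obtain ⟨p, hpne, hcσ, hcτ, hpσ, hpτ, ha, hc⟩ := g.main_aux σ τ hyp τ' m hagr hprot hdis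
    obtain ⟨τ'', hτ''⟩ := g.exists_pval_eq_cVal τ p
    have hchp : List.Chain' g.E p := hcτ.2.2.1
    calc g.cVal σ [g.v0] = g.pval σ τ' [g.v0] := hτ'.symm
      _ = g.pval σ τ' p := by rw [hpσ]; exact (g.pval_playList σ τ' (by simp) _).symm
      _ ≤ g.cVal σ p := g.pval_le_cVal σ τ' p
      _ = g.cVal τ p := hc
      _ = g.pval τ τ'' p := hτ''.symm
      _ = g.pval τ (g.fol p hchp τ'') [g.v0] := (g.fol_pval hcτ hchp τ'').symm
      _ ≤ g.cVal τ [g.v0] := g.pval_le_cVal τ _ [g.v0]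

end GSRGame

/-- if for every maximal history `h` compatible with both `σ` and `τ` there is
a prefix `h'` of `h` with `aVal(h', σ) = aVal(h', τ)` and `cVal(h', σ) = cVal(h', τ)`, then
`aVal(v₀, σ) = aVal(v₀, τ)` and `cVal(v₀, σ) = cVal(v₀, τ)`. -/
theorem stmt16 (g : GSRGame) (σ τ : g.Strat)
    (hyp : ∀ h : List g.V, g.Compat σ h → g.Compat τ h →
      (∀ h' : List g.V, h <+: h' → h ≠ h' → ¬ (g.Compat σ h' ∧ g.Compat τ h')) →
      ∃ p : List g.V, p <+: h ∧ p ≠ [] ∧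
        g.aVal σ p = g.aVal τ p ∧ g.cVal σ p = g.cVal τ p) :
    g.aVal σ [g.v0] = g.aVal τ [g.v0] ∧ g.cVal σ [g.v0] = g.cVal τ [g.v0] := by
  have hyp' : ∀ h : List g.V, g.Compat τ h → g.Compat σ h →
      (∀ h' : List g.V, h <+: h' → h ≠ h' → ¬ (g.Compat τ h' ∧ g.Compat σ h')) →
      ∃ p : List g.V, p <+: h ∧ p ≠ [] ∧
        g.aVal τ p = g.aVal σ p ∧ g.cVal τ p = g.cVal σ p := by
    intro h h1 h2 h3
    obtain ⟨p, hp1, hp2, hp3, hp4⟩ := hyp h h2 h1 (fun h' a b hc => h3 h' a b ⟨hc.2, hc.1⟩)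
    exact ⟨p, hp1, hp2, hp3.symm, hp4.symm⟩
  exact ⟨le_antisymm (g.aVal_mono σ τ hyp) (g.aVal_mono τ σ hyp'),
    le_antisymm (g.cVal_mono σ τ hyp) (g.cVal_mono τ σ hyp')⟩
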